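/- arXiv:2105.04076 — 2 statements merged into one kernel-verified Lean document; each statement's English description precedes it below -/
import Mathlib

section
/- Let (b_N), (d_N), (b'_N), (d'_N) be non-decreasing sequences of positive integers with b_N·d_N = b'_N·d'_N = M_N for all N, where M_N → ∞, and let ϑ, ϑ' ∈ {−1, 1} with ϑ ≠ ϑ'. If lim_{N→∞} (1/M_N²) · #{ (i,j) ∈ [M_N]² : Γ_{b_N,d_N}^{(ϑ)}(i,j) = Γ_{b'_N,d'_N}^{(ϑ')}(i,j) } = 0, then for each s ∈ {1, 2}, #{ (i₁, i₂, j) ∈ [M_N]³ : π_s(Γ_{b_N,d_N}^{(ϑ)}(i₁, j)) = π_s(Γ_{b'_N,d'_N}^{(ϑ')}(i₂, j)) } = o(M_N³), i.e. this count divided by M_N³ tends to 0 as N → ∞, where π_s : [M_N]² → [M_N] is the projection onto the s-th coordinate. -/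
open Filter

/-- The partial transpose `Γ_{b,d}^{(ϑ)} : [N]² → [N]²` for `N = b·d`, as an entry permutation.
Identifying `[N] ≃ [b] × [d]` via `i = a₁·d + a₂` (`0`-based), the right partial transpose
(`θ = true`, i.e. `ϑ = 1`) swaps `a₂` and `a₋₂`, while the left partial transpose (`θ = false`,
i.e. `ϑ = -1`) swaps `a₁` and `a₋₁`. -/
def pt {b d M : ℕ} (θ : Bool) (h : b * d = M) :
    Fin M × Fin M → Fin M × Fin M := fun x =>
  let e : Fin M ≃ Fin b × Fin d := (finCongr h).symm.trans finProdFinEquiv.symm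
  let u := e x.1
  let v := e x.2
  if θ then (e.symm (u.1, v.2), e.symm (v.1, u.2))
  else (e.symm (v.1, u.2), e.symm (u.1, v.2))

section aux
open Finset

private lemma pt_true_fst {b d M : ℕ} (h : b * d = M) (x : Fin M × Fin M) :
    ((pt true h x).1 : ℕ) = x.2.val % d + d * (x.1.val / d) := by
  simp [pt, finProdFinEquiv, Fin.divNat, Fin.modNat, finCongr]

private lemma pt_true_snd {b d M : ℕ} (h : b * d = M) (x : Fin M × Fin M) :
    ((pt true h x).2 : ℕ) = x.1.val % d + d * (x.2.val / d) := by
  simp [pt, finProdFinEquiv, Fin.divNat, Fin.modNat, finCongr]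

private lemma pt_false_eq {b d M : ℕ} (h : b * d = M) (x : Fin M × Fin M) :
    pt false h x = ((pt true h x).2, (pt true h x).1) := by
  simp [pt]

/-- the three-variable count -/
def Tcnt (d d' M : ℕ) : Finset (Fin M × Fin M × Fin M) :=
  Finset.univ.filter fun x =>
    x.2.2.val % d + d * (x.1.val / d) = x.2.1.val % d' + d' * (x.2.2.val / d')

/-- the two-variable (coincidence) count -/
def Ccnt (d d' M : ℕ) : Finset (Fin M × Fin M) :=
  Finset.univ.filter fun x =>
    x.2.val % d + d * (x.1.val / d) = x.1.val % d' + d' * (x.2.val / d')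

private theorem Tcnt_le {b d b' d' M : ℕ} (hbd : b * d = M) (hb'd' : b' * d' = M)
    (hd : 0 < d) (hd' : 0 < d') : (Tcnt d d' M).card ≤ M * M + M * (b' * d) := by
  classical
  set S := Tcnt d d' M with hS
  have key : ∀ x ∈ S, x.2.2.val % d + d * (x.1.val / d)
      = x.2.1.val % d' + d' * (x.2.2.val / d') := by
    intro x hx
    simpa [Tcnt, hS] using (Finset.mem_filter.mp hx).2
  let f : Fin M × Fin M × Fin M → Fin M × Fin M := fun x => (x.2.2, x.2.1)
  have stepA : S.card ≤ d * (S.image f).card := by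
    apply Finset.card_le_mul_card_image
    intro p hp
    have : (S.filter fun x => f x = p).card ≤ (Finset.range d).card := by
      apply Finset.card_le_card_of_injOn (fun x => x.1.val % d)
      · intro x hx
        simp [Nat.mod_lt _ hd]
      · intro x hx y hy hxy
        have hxS := Finset.mem_filter.mp hx
        have hyS := Finset.mem_filter.mp hy
        have hfx : f x = p := hxS.2
        have hfy : f y = p := hyS.2
        have h2 : x.2 = y.2 := by
          have := hfx.trans hfy.symm
          simp only [f, Prod.mk.injEq] at this
          exact Prod.ext this.2 this.1
        have ex := key x hxS.1
        have ey := key y hyS.1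
        rw [h2] at ex
        have hsum := ex.trans ey.symm
        have hdiv : x.1.val / d = y.1.val / d :=
          Nat.eq_of_mul_eq_mul_left hd (Nat.add_left_cancel hsum)
        have hval : x.1.val = y.1.val := by
          conv_lhs => rw [← Nat.div_add_mod x.1.val d]
          conv_rhs => rw [← Nat.div_add_mod y.1.val d]
          have hxy' : x.1.val % d = y.1.val % d := hxy
          rw [hdiv, hxy']
        exact Prod.ext (Fin.ext hval) h2
    simpa using this
  have stepB : (S.image f).card ≤ M * (b' * (d' / d + 1)) := by
    have : (S.image f).card ≤ ((Finset.univ : Finset (Fin M)) ×ˢ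
        (Finset.range b' ×ˢ Finset.range (d' / d + 1))).card := by
      apply Finset.card_le_card_of_injOn
        (fun p => (p.1, (p.2.val / d', p.2.val % d' / d)))
      · intro p hp
        simp only [Finset.mem_coe, Finset.mem_product, Finset.mem_univ, Finset.mem_range, true_and]
        refine ⟨?_, ?_⟩
        · rw [Nat.div_lt_iff_lt_mul hd', mul_comm] at *
          exact hb'd' ▸ p.2.isLt
        · have h1 : p.2.val % d' < d' := Nat.mod_lt _ hd'
          have := Nat.div_le_div_right (c := d) (Nat.le_of_lt h1)
          omega
      · intro p hp q hq hpq
        simp only [Prod.mk.injEq] at hpq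
        obtain ⟨h1, h2, h3⟩ := hpq
        obtain ⟨x, hxS, hfx⟩ := Finset.mem_image.mp hp
        obtain ⟨y, hyS, hfy⟩ := Finset.mem_image.mp hq
        have ex := key x hxS
        have ey := key y hyS
        have hx22 : x.2.2 = p.1 := congrArg Prod.fst hfx
        have hx21 : x.2.1 = p.2 := congrArg Prod.snd hfx
        have hy22 : y.2.2 = q.1 := congrArg Prod.fst hfy
        have hy21 : y.2.1 = q.2 := congrArg Prod.snd hfy
        rw [hx22, hx21] at ex
        rw [hy22, hy21, ← h1] at ey
        have hr : (p.2.val % d' + d' * (p.1.val / d')) % d = p.1.val % d % d := by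
          rw [← ex, Nat.add_mul_mod_self_left]
        have hq' : (q.2.val % d' + d' * (p.1.val / d')) % d = p.1.val % d % d := by
          rw [← ey, Nat.add_mul_mod_self_left]
        have hmodeq : p.2.val % d' % d = q.2.val % d' % d :=
          Nat.ModEq.add_right_cancel' _ (hr.trans hq'.symm)
        have hrr : p.2.val % d' = q.2.val % d' := by
          conv_lhs => rw [← Nat.div_add_mod (p.2.val % d') d]
          conv_rhs => rw [← Nat.div_add_mod (q.2.val % d') d]
          rw [h3, hmodeq]
        have hval : p.2.val = q.2.val := by
          conv_lhs => rw [← Nat.div_add_mod p.2.val d']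
          conv_rhs => rw [← Nat.div_add_mod q.2.val d']
          rw [h2, hrr]
        exact Prod.ext h1 (Fin.ext hval)
    simpa using this
  calc S.card ≤ d * (S.image f).card := stepA
    _ ≤ d * (M * (b' * (d' / d + 1))) := Nat.mul_le_mul_left _ stepB
    _ = M * (b' * (d * (d' / d) + d)) := by ring
    _ ≤ M * (b' * (d' + d)) := by
        have : d * (d' / d) ≤ d' := Nat.mul_div_le d' d
        exact Nat.mul_le_mul_left _ (Nat.mul_le_mul_left _ (by omega))
    _ = M * M + M * (b' * d) := by rw [← hb'd']; ring

private lemma bnd {b d M a s : ℕ} (hbd : b * d = M) (ha : a < b) (hs : s < d) :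
    d * a + s < M := by
  calc d * a + s < d * a + d := by omega
    _ = d * (a + 1) := by ring
    _ ≤ d * b := Nat.mul_le_mul_left d ha
    _ = M := by rw [← hbd]; ring

private theorem le_Ccnt {b d d' M : ℕ} (hbd : b * d = M) (hd0 : 0 < d) (hd' : 0 < d') :
    b * ((d - d / 2) * (d / (2 * d'))) ≤ (Ccnt d d' M).card := by
  classical
  set q := d / (2 * d') with hq
  have hq2 : 2 * (d' * q) ≤ d := by
    calc 2 * (d' * q) = q * (2 * d') := by ring
      _ ≤ d := Nat.div_mul_le_self d (2 * d')
  have hst : ∀ s t : ℕ, s < d - d / 2 → t < q → s + d' * t < d := by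
    intro s t hs ht
    have h1 : d' * t + d' ≤ d' * q := by
      have := Nat.mul_le_mul_left d' (Nat.succ_le_of_lt ht)
      calc d' * t + d' = d' * (t + 1) := by ring
        _ ≤ d' * q := this
    omega
  have hF : ∀ z : Fin b × Fin (d - d / 2) × Fin q,
      (d * z.1.val + z.2.1.val < M) ∧ (d * z.1.val + (z.2.1.val + d' * z.2.2.val) < M) := by
    intro z
    refine ⟨bnd hbd z.1.isLt (by have := z.2.1.isLt; omega), bnd hbd z.1.isLt ?_⟩
    exact hst _ _ z.2.1.isLt z.2.2.isLt
  let F : Fin b × Fin (d - d / 2) × Fin q → Fin M × Fin M := fun z =>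
    (⟨d * z.1.val + z.2.1.val, (hF z).1⟩,
     ⟨d * z.1.val + (z.2.1.val + d' * z.2.2.val), (hF z).2⟩)
  have hcard : (Finset.univ : Finset (Fin b × Fin (d - d / 2) × Fin q)).card
      ≤ (Ccnt d d' M).card := by
    apply Finset.card_le_card_of_injOn F
    · intro z _
      obtain ⟨⟨a, ha⟩, ⟨s, hs⟩, ⟨t, ht⟩⟩ := z
      simp only [Ccnt, Finset.mem_coe, Finset.mem_filter, Finset.mem_univ, true_and, F]
      have hlt : s + d' * t < d := hst s t hs ht
      have e1 : (d * a + (s + d' * t)) % d = s + d' * t := by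
        rw [Nat.mul_add_mod]; exact Nat.mod_eq_of_lt hlt
      have e2 : (d * a + s) / d = a := by
        rw [Nat.mul_add_div hd0, Nat.div_eq_of_lt (by omega)]; omega
      have e3 : d * a + (s + d' * t) = (d * a + s) + d' * t := by ring
      have e4 : ((d * a + s) + d' * t) / d' = (d * a + s) / d' + t :=
        Nat.add_mul_div_left _ _ hd'
      have e5 : (d * a + s) % d' + d' * ((d * a + s) / d') = d * a + s :=
        Nat.mod_add_div _ _
      rw [e1, e2, e3, e4, mul_add]
      omega
    · intro z _ w _ hzw
      obtain ⟨⟨a, ha⟩, ⟨s, hs⟩, ⟨t, ht⟩⟩ := z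
      obtain ⟨⟨a', ha'⟩, ⟨s', hs'⟩, ⟨t', ht'⟩⟩ := w
      simp only [F, Prod.mk.injEq, Fin.mk.injEq] at hzw
      obtain ⟨h1, h2⟩ := hzw
      have ea : a = a' ∧ s = s' := by
        have d1 : (d * a + s) / d = a := by
          rw [Nat.mul_add_div hd0, Nat.div_eq_of_lt (by omega)]; omega
        have d2 : (d * a' + s') / d = a' := by
          rw [Nat.mul_add_div hd0, Nat.div_eq_of_lt (by omega)]; omega
        have haa : a = a' := by rw [← d1, ← d2, h1]
        subst haa
        exact ⟨rfl, by omega⟩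
      obtain ⟨rfl, rfl⟩ := ea
      have : d' * t = d' * t' := by omega
      have : t = t' := Nat.eq_of_mul_eq_mul_left hd' this
      simp [this]
  simpa using hcard

private lemma Ccnt_swap (d d' M : ℕ) : (Ccnt d d' M).card = (Ccnt d' d M).card := by
  apply Finset.card_nbij' Prod.swap Prod.swap
  · intro x hx
    simp only [Ccnt, Finset.mem_coe, Finset.mem_filter, Finset.mem_univ, true_and] at hx ⊢
    exact hx.symm
  · intro x hx
    simp only [Ccnt, Finset.mem_coe, Finset.mem_filter, Finset.mem_univ, true_and] at hx ⊢
    exact hx.symm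
  · intro x _; simp
  · intro x _; simp

private lemma T2card (d d' M : ℕ) :
    (Finset.univ.filter fun x : Fin M × Fin M × Fin M =>
      x.1.val % d + d * (x.2.2.val / d) = x.2.2.val % d' + d' * (x.2.1.val / d')).card
    = (Tcnt d' d M).card := by
  apply Finset.card_nbij' (fun x => (x.2.1, x.1, x.2.2)) (fun x => (x.2.1, x.1, x.2.2))
  · intro x hx
    simp only [Tcnt, Finset.mem_coe, Finset.mem_filter, Finset.mem_univ, true_and] at hx ⊢
    exact hx.symm
  · intro x hx
    simp only [Tcnt, Finset.mem_coe, Finset.mem_filter, Finset.mem_univ, true_and] at hx ⊢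
    exact hx.symm
  · intro x _; rfl
  · intro x _; rfl

private lemma conj_iff (i j d d' : ℕ) :
    ((j % d + d * (i / d) = i % d' + d' * (j / d')) ∧
      (i % d + d * (j / d) = j % d' + d' * (i / d')))
    ↔ (j % d + d * (i / d) = i % d' + d' * (j / d')) := by
  have h1 := Nat.mod_add_div i d
  have h2 := Nat.mod_add_div j d
  have h3 := Nat.mod_add_div i d'
  have h4 := Nat.mod_add_div j d'
  constructor
  · exact fun h => h.1
  · intro h; exact ⟨h, by omega⟩

set_option maxHeartbeats 1000000 in
private lemma auxProdTop (b d b' d' M : ℕ → ℕ)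
    (hbm : Monotone b) (hd'm : Monotone d')
    (hb : ∀ n, 0 < b n) (hd : ∀ n, 0 < d n) (hb' : ∀ n, 0 < b' n) (hd' : ∀ n, 0 < d' n)
    (hM : ∀ n, b n * d n = M n) (hM' : ∀ n, b' n * d' n = M n)
    (hMtop : Tendsto M atTop atTop)
    (h0C : Tendsto (fun n => ((Ccnt (d n) (d' n) (M n)).card : ℝ) / (M n : ℝ) ^ 2)
      atTop (nhds 0)) :
    Tendsto (fun n => b n * d' n) atTop atTop := by
  have hmono : Monotone (fun n => b n * d' n) :=
    fun i j hij => Nat.mul_le_mul (hbm hij) (hd'm hij)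
  by_contra hcon
  have hnot : ¬ ∀ c, ∃ n, c ≤ b n * d' n := fun h =>
    hcon (tendsto_atTop_atTop_of_monotone hmono fun c => h c)
  push_neg at hnot
  obtain ⟨K, hK⟩ := hnot
  have hK1 : 1 ≤ K := by
    have := hK 0
    have := Nat.mul_pos (hb 0) (hd' 0)
    omega
  have hKr1 : (1 : ℝ) ≤ (K : ℝ) := by exact_mod_cast hK1
  set Kr : ℝ := (K : ℝ) with hKr
  have hεpos : (0 : ℝ) < 1 / (8 * Kr ^ 2) := by positivity
  have hev1 : ∀ᶠ n in atTop, 4 * K * K ≤ M n := hMtop.eventually_ge_atTop _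
  have hev2 : ∀ᶠ n in atTop,
      ((Ccnt (d n) (d' n) (M n)).card : ℝ) / (M n : ℝ) ^ 2 < 1 / (8 * Kr ^ 2) :=
    h0C.eventually_lt_const hεpos
  obtain ⟨n, hn1, hn2⟩ := (hev1.and hev2).exists
  have hBD : (b n : ℝ) * (d n : ℝ) = (M n : ℝ) := by exact_mod_cast hM n
  have hB1 : (1 : ℝ) ≤ (b n : ℝ) := by exact_mod_cast hb n
  have hD1 : (1 : ℝ) ≤ (d n : ℝ) := by exact_mod_cast hd n
  have hD'1 : (1 : ℝ) ≤ (d' n : ℝ) := by exact_mod_cast hd' n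
  have hBD' : (b n : ℝ) * (d' n : ℝ) ≤ Kr := by
    have h1 : b n * d' n ≤ K := Nat.le_of_lt (hK n)
    calc (b n : ℝ) * (d' n : ℝ) = ((b n * d' n : ℕ) : ℝ) := by push_cast; ring
      _ ≤ (K : ℝ) := by exact_mod_cast h1
  have hMK : 4 * Kr * Kr ≤ (M n : ℝ) := by
    calc (4 : ℝ) * Kr * Kr = ((4 * K * K : ℕ) : ℝ) := by push_cast; ring
      _ ≤ (M n : ℝ) := by exact_mod_cast hn1
  -- the counting lower bound
  have hcnt := le_Ccnt (hM n) (hd n) (hd' n)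
  have hcntR : (b n : ℝ) * (((d n - d n / 2 : ℕ) : ℝ) * ((d n / (2 * d' n) : ℕ) : ℝ))
      ≤ ((Ccnt (d n) (d' n) (M n)).card : ℝ) := by exact_mod_cast hcnt
  have hX2 : (d n : ℝ) ≤ 2 * ((d n - d n / 2 : ℕ) : ℝ) := by
    have : d n ≤ 2 * (d n - d n / 2) := by omega
    exact_mod_cast this
  have hQ0 : (0 : ℝ) ≤ ((d n / (2 * d' n) : ℕ) : ℝ) := by positivity
  have hX0 : (0 : ℝ) ≤ ((d n - d n / 2 : ℕ) : ℝ) := by positivity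
  have hQD : (d n : ℝ) ≤ 2 * (d' n : ℝ) * ((d n / (2 * d' n) : ℕ) : ℝ) + 2 * (d' n : ℝ) := by
    have h1 := Nat.div_add_mod (d n) (2 * d' n)
    have h2 : d n % (2 * d' n) < 2 * d' n := Nat.mod_lt _ (by have := hd' n; omega)
    have h3 : d n ≤ 2 * d' n * (d n / (2 * d' n)) + 2 * d' n := by omega
    calc (d n : ℝ) ≤ ((2 * d' n * (d n / (2 * d' n)) + 2 * d' n : ℕ) : ℝ) := by
          exact_mod_cast h3
      _ = 2 * (d' n : ℝ) * ((d n / (2 * d' n) : ℕ) : ℝ) + 2 * (d' n : ℝ) := by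
          push_cast; ring
  set Mr : ℝ := ((M n : ℕ) : ℝ) with hMrdef
  set C : ℝ := ((Ccnt (d n) (d' n) (M n)).card : ℝ) with hCdef
  set B : ℝ := ((b n : ℕ) : ℝ)
  set D : ℝ := ((d n : ℕ) : ℝ)
  set D' : ℝ := ((d' n : ℕ) : ℝ)
  set X : ℝ := ((d n - d n / 2 : ℕ) : ℝ)
  set Q : ℝ := ((d n / (2 * d' n) : ℕ) : ℝ)
  -- numeric contradiction
  have hKr0 : (0 : ℝ) < Kr := by linarith
  have hD'K : D' ≤ Kr := by nlinarith
  have hBK : B ≤ Kr := by nlinarith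
  have hDK : Mr ≤ D * Kr := by nlinarith
  have hMr0 : (0 : ℝ) < Mr := by nlinarith
  have hMrQ : Mr ≤ 4 * Kr ^ 2 * Q := by
    have s1 : D' * Q ≤ Kr * Q := mul_le_mul_of_nonneg_right hD'K hQ0
    have s2 : D ≤ 2 * (Kr * Q) + 2 * Kr := by linarith
    have s3 : D * Kr ≤ (2 * (Kr * Q) + 2 * Kr) * Kr :=
      mul_le_mul_of_nonneg_right s2 (le_of_lt hKr0)
    have s4 : (2 * (Kr * Q) + 2 * Kr) * Kr = 2 * (Kr ^ 2 * Q) + 2 * Kr ^ 2 := by ring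
    have s5 : Mr ≤ 2 * (Kr ^ 2 * Q) + 2 * Kr ^ 2 := by linarith
    have s6 : 4 * (Kr * Kr) ≤ Mr := by linarith
    have s7 : Kr * Kr = Kr ^ 2 := by ring
    have : 4 * Kr ^ 2 * Q = 4 * (Kr ^ 2 * Q) := by ring
    linarith
  have hCbig : Mr / 2 * Q ≤ C := by
    have u1 : B * D ≤ B * (2 * X) :=
      mul_le_mul_of_nonneg_left hX2 (by linarith)
    have u1' : B * (2 * X) = 2 * (B * X) := by ring
    have u2 : Mr / 2 ≤ B * X := by linarith
    have u3 : Mr / 2 * Q ≤ (B * X) * Q := mul_le_mul_of_nonneg_right u2 hQ0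
    have u4 : (B * X) * Q = B * (X * Q) := by ring
    linarith
  have hlt : C < 1 / (8 * Kr ^ 2) * Mr ^ 2 := by
    have hpos : (0 : ℝ) < Mr ^ 2 := by positivity
    exact (div_lt_iff₀ hpos).mp hn2
  have v1 : Mr * Mr ≤ 4 * Kr ^ 2 * Q * Mr := mul_le_mul_of_nonneg_right hMrQ (le_of_lt hMr0)
  have v2 : 4 * Kr ^ 2 * Q * Mr = 8 * Kr ^ 2 * (Mr / 2 * Q) := by ring
  have v3 : 8 * Kr ^ 2 * (Mr / 2 * Q) ≤ 8 * Kr ^ 2 * C :=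
    mul_le_mul_of_nonneg_left hCbig (by positivity)
  have v4 : 8 * Kr ^ 2 * C < 8 * Kr ^ 2 * (1 / (8 * Kr ^ 2) * Mr ^ 2) :=
    mul_lt_mul_of_pos_left hlt (by positivity)
  have v5 : 8 * Kr ^ 2 * (1 / (8 * Kr ^ 2) * Mr ^ 2) = Mr ^ 2 := by
    field_simp
  have v6 : Mr ^ 2 = Mr * Mr := by ring
  linarith

set_option maxHeartbeats 1000000 in
private lemma auxMaster (b d b' d' M : ℕ → ℕ)
    (hbm : Monotone b) (hd'm : Monotone d')
    (hb : ∀ n, 0 < b n) (hd : ∀ n, 0 < d n) (hb' : ∀ n, 0 < b' n) (hd' : ∀ n, 0 < d' n)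
    (hM : ∀ n, b n * d n = M n) (hM' : ∀ n, b' n * d' n = M n)
    (hMtop : Tendsto M atTop atTop)
    (h0C : Tendsto (fun n => ((Ccnt (d n) (d' n) (M n)).card : ℝ) / (M n : ℝ) ^ 2)
      atTop (nhds 0)) :
    Tendsto (fun n => ((Tcnt (d n) (d' n) (M n)).card : ℝ) / (M n : ℝ) ^ 3)
      atTop (nhds 0) := by
  have hptop := auxProdTop b d b' d' M hbm hd'm hb hd hb' hd' hM hM' hMtop h0C
  have hbound : ∀ n, ((Tcnt (d n) (d' n) (M n)).card : ℝ) / (M n : ℝ) ^ 3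
      ≤ ((M n : ℝ))⁻¹ + ((b n * d' n : ℕ) : ℝ)⁻¹ := by
    intro n
    have hM0 : 0 < M n := by rw [← hM n]; exact Nat.mul_pos (hb n) (hd n)
    have hMr0 : (0 : ℝ) < (M n : ℝ) := by exact_mod_cast hM0
    have hp0 : (0 : ℝ) < ((b n * d' n : ℕ) : ℝ) := by
      exact_mod_cast Nat.mul_pos (hb n) (hd' n)
    have hcard := Tcnt_le (hM n) (hM' n) (hd n) (hd' n)
    have hcardR : ((Tcnt (d n) (d' n) (M n)).card : ℝ)
        ≤ (M n : ℝ) * (M n : ℝ) + (M n : ℝ) * ((b' n * d n : ℕ) : ℝ) := by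
      exact_mod_cast hcard
    have hsq : (M n : ℝ) ^ 2 = ((b n * d' n : ℕ) : ℝ) * ((b' n * d n : ℕ) : ℝ) := by
      have : M n * M n = (b n * d' n) * (b' n * d n) := by
        calc M n * M n = (b n * d n) * (b' n * d' n) := by rw [hM n, hM' n]
          _ = (b n * d' n) * (b' n * d n) := by ring
      have := congrArg (fun k : ℕ => (k : ℝ)) this
      push_cast at this
      push_cast
      nlinarith [this]
    rw [div_le_iff₀ (by positivity)]
    have key : (((M n : ℝ))⁻¹ + ((b n * d' n : ℕ) : ℝ)⁻¹) * (M n : ℝ) ^ 3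
        = (M n : ℝ) * (M n : ℝ) + (M n : ℝ) * ((b' n * d n : ℕ) : ℝ) := by
      have t1 : ((M n : ℝ))⁻¹ * (M n : ℝ) ^ 3 = (M n : ℝ) * (M n : ℝ) := by
        calc ((M n : ℝ))⁻¹ * (M n : ℝ) ^ 3
            = ((M n : ℝ))⁻¹ * ((M n : ℝ) * ((M n : ℝ) * (M n : ℝ))) := by ring
          _ = (M n : ℝ) * (M n : ℝ) := inv_mul_cancel_left₀ (ne_of_gt hMr0) _
      have e3 : (M n : ℝ) ^ 3
          = ((b n * d' n : ℕ) : ℝ) * ((M n : ℝ) * ((b' n * d n : ℕ) : ℝ)) := by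
        calc (M n : ℝ) ^ 3 = (M n : ℝ) ^ 2 * (M n : ℝ) := by ring
          _ = ((b n * d' n : ℕ) : ℝ) * ((b' n * d n : ℕ) : ℝ) * (M n : ℝ) := by rw [hsq]
          _ = ((b n * d' n : ℕ) : ℝ) * ((M n : ℝ) * ((b' n * d n : ℕ) : ℝ)) := by ring
      have t2 : ((b n * d' n : ℕ) : ℝ)⁻¹ * (M n : ℝ) ^ 3
          = (M n : ℝ) * ((b' n * d n : ℕ) : ℝ) := by
        rw [e3]
        exact inv_mul_cancel_left₀ (ne_of_gt hp0) _
      rw [add_mul, t1, t2]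
    rw [key]
    exact hcardR
  have t1 : Tendsto (fun n => ((M n : ℝ))⁻¹) atTop (nhds 0) :=
    (tendsto_natCast_atTop_atTop.comp hMtop).inv_tendsto_atTop
  have t2 : Tendsto (fun n => ((b n * d' n : ℕ) : ℝ)⁻¹) atTop (nhds 0) :=
    (tendsto_natCast_atTop_atTop.comp hptop).inv_tendsto_atTop
  have tadd : Tendsto (fun n => ((M n : ℝ))⁻¹ + ((b n * d' n : ℕ) : ℝ)⁻¹)
      atTop (nhds 0) := by
    simpa using t1.add t2
  exact squeeze_zero (fun n => by positivity) hbound tadd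

end aux

/-- for non-decreasing sequences of positive integers with
`b_N·d_N = b'_N·d'_N = M_N → ∞` and opposite `ϑ ≠ ϑ'` (encoded by `θ ≠ θ'`), if
`(1/M_N²)·#{(i,j) : Γ_{b_N,d_N}^{(ϑ)}(i,j) = Γ_{b'_N,d'_N}^{(ϑ')}(i,j)} → 0`, then for each
coordinate projection `π_s` (`s = 1, 2`),
`#{(i₁,i₂,j) : π_s(Γ_{b_N,d_N}^{(ϑ)}(i₁,j)) = π_s(Γ_{b'_N,d'_N}^{(ϑ')}(i₂,j))} = o(M_N³)`. -/
theorem stmt_10 (b d b' d' M : ℕ → ℕ)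
    (hbm : Monotone b) (hdm : Monotone d) (hb'm : Monotone b') (hd'm : Monotone d')
    (hb : ∀ n, 0 < b n) (hd : ∀ n, 0 < d n) (hb' : ∀ n, 0 < b' n) (hd' : ∀ n, 0 < d' n)
    (hM : ∀ n, b n * d n = M n) (hM' : ∀ n, b' n * d' n = M n)
    (hMtop : Tendsto M atTop atTop) (θ θ' : Bool) (hθ : θ ≠ θ')
    (h0 : Tendsto
      (fun n => ((Finset.univ.filter fun x : Fin (M n) × Fin (M n) =>
          pt θ (hM n) x = pt θ' (hM' n) x).card : ℝ) / (M n : ℝ) ^ 2)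
      atTop (nhds 0)) :
    Tendsto
      (fun n => ((Finset.univ.filter fun x : Fin (M n) × Fin (M n) × Fin (M n) =>
          (pt θ (hM n) (x.1, x.2.2)).1 = (pt θ' (hM' n) (x.2.1, x.2.2)).1).card : ℝ)
        / (M n : ℝ) ^ 3)
      atTop (nhds 0)
    ∧ Tendsto
      (fun n => ((Finset.univ.filter fun x : Fin (M n) × Fin (M n) × Fin (M n) =>
          (pt θ (hM n) (x.1, x.2.2)).2 = (pt θ' (hM' n) (x.2.1, x.2.2)).2).card : ℝ)
        / (M n : ℝ) ^ 3)
      atTop (nhds 0) := by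
  cases θ <;> cases θ' <;> try exact absurd rfl hθ
  -- case θ = false, θ' = true
  · have hC : ∀ n, (Finset.univ.filter fun x : Fin (M n) × Fin (M n) =>
        pt false (hM n) x = pt true (hM' n) x).card = (Ccnt (d n) (d' n) (M n)).card := by
      intro n
      apply congrArg Finset.card
      apply Finset.filter_congr
      intro x _
      simp only [pt_false_eq, Prod.ext_iff, Fin.ext_iff, pt_true_fst, pt_true_snd]
      have h1 := Nat.mod_add_div x.1.val (d n)
      have h2 := Nat.mod_add_div x.2.val (d n)
      have h3 := Nat.mod_add_div x.1.val (d' n)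
      have h4 := Nat.mod_add_div x.2.val (d' n)
      omega
    have h0C : Tendsto (fun n => ((Ccnt (d n) (d' n) (M n)).card : ℝ) / (M n : ℝ) ^ 2)
        atTop (nhds 0) := h0.congr fun n => by rw [hC n]
    have h0C' : Tendsto (fun n => ((Ccnt (d' n) (d n) (M n)).card : ℝ) / (M n : ℝ) ^ 2)
        atTop (nhds 0) := h0C.congr fun n => by rw [Ccnt_swap]
    have m1 := auxMaster b d b' d' M hbm hd'm hb hd hb' hd' hM hM' hMtop h0C
    have m2 := auxMaster b' d' b d M hb'm hdm hb' hd' hb hd hM' hM hMtop h0C'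
    constructor
    · -- s = 1 : condition is x.1%d + d*(x.2.2/d) = x.2.2%d' + d'*(x.2.1/d')  ~ Tcnt d' d
      refine m2.congr fun n => ?_
      congr 1
      rw [← T2card (d n) (d' n) (M n)]
      apply congrArg Nat.cast
      apply congrArg Finset.card
      apply Finset.filter_congr
      intro x _
      simp only [pt_false_eq, Fin.ext_iff, pt_true_fst, pt_true_snd]
    · -- s = 2 : condition is x.2.2%d + d*(x.1/d) = x.2.1%d' + d'*(x.2.2/d') ~ Tcnt d d'
      refine m1.congr fun n => ?_
      congr 1
      apply congrArg Nat.cast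
      apply congrArg Finset.card
      show Tcnt (d n) (d' n) (M n) = _
      unfold Tcnt
      apply Finset.filter_congr
      intro x _
      simp only [pt_false_eq, Fin.ext_iff, pt_true_fst, pt_true_snd]
  -- case θ = true, θ' = false
  · have hC : ∀ n, (Finset.univ.filter fun x : Fin (M n) × Fin (M n) =>
        pt true (hM n) x = pt false (hM' n) x).card = (Ccnt (d n) (d' n) (M n)).card := by
      intro n
      apply congrArg Finset.card
      apply Finset.filter_congr
      intro x _
      simp only [pt_false_eq, Prod.ext_iff, Fin.ext_iff, pt_true_fst, pt_true_snd]
      have h1 := Nat.mod_add_div x.1.val (d n)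
      have h2 := Nat.mod_add_div x.2.val (d n)
      have h3 := Nat.mod_add_div x.1.val (d' n)
      have h4 := Nat.mod_add_div x.2.val (d' n)
      omega
    have h0C : Tendsto (fun n => ((Ccnt (d n) (d' n) (M n)).card : ℝ) / (M n : ℝ) ^ 2)
        atTop (nhds 0) := h0.congr fun n => by rw [hC n]
    have h0C' : Tendsto (fun n => ((Ccnt (d' n) (d n) (M n)).card : ℝ) / (M n : ℝ) ^ 2)
        atTop (nhds 0) := h0C.congr fun n => by rw [Ccnt_swap]
    have m1 := auxMaster b d b' d' M hbm hd'm hb hd hb' hd' hM hM' hMtop h0C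
    have m2 := auxMaster b' d' b d M hb'm hdm hb' hd' hb hd hM' hM hMtop h0C'
    constructor
    · refine m1.congr fun n => ?_
      congr 1
      apply congrArg Nat.cast
      apply congrArg Finset.card
      show Tcnt (d n) (d' n) (M n) = _
      unfold Tcnt
      apply Finset.filter_congr
      intro x _
      simp only [pt_false_eq, Fin.ext_iff, pt_true_fst, pt_true_snd]
    · refine m2.congr fun n => ?_
      congr 1
      rw [← T2card (d n) (d' n) (M n)]
      apply congrArg Nat.cast
      apply congrArg Finset.card
      apply Finset.filter_congr
      intro x _
      simp only [pt_false_eq, Fin.ext_iff, pt_true_fst, pt_true_snd]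
end

section
/- Let (b_N), (d_N), (b'_N), (d'_N) be non-decreasing sequences of positive integers with b_N·d_N = b'_N·d'_N = M_N for all N, where M_N → ∞, and let ϑ, ϑ' ∈ {−1, 1}. Write Γ_N = Γ_{b_N, d_N}^{(ϑ)} and Γ'_N = Γ_{b'_N, d'_N}^{(ϑ')}. Then lim_{N→∞} E[ tr( U_{M_N}^{Γ_N} (U_{M_N}^{Γ'_N})* ) ] = 0 if and only if lim_{N→∞} (1/M_N²) · #{ (i,j) ∈ [M_N]² : Γ_N(i,j) = Γ'_N(i,j) } = 0. -/
open Filter MeasureTheory Matrix ComplexConjugate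

/-- For a map `σ : [N]² → [N]²`, `U^σ` is the matrix whose `(i,j)` entry is `U_{σ(i,j)}`. -/
def entryMap {N : ℕ} (σ : Fin N × Fin N → Fin N × Fin N)
    (U : Matrix (Fin N) (Fin N) ℂ) : Matrix (Fin N) (Fin N) ℂ :=
  Matrix.of fun i j => U (σ (i, j)).1 (σ (i, j)).2

noncomputable instance (N : ℕ) : MeasurableSpace (Matrix.unitaryGroup (Fin N) ℂ) := borel _
instance (N : ℕ) : BorelSpace (Matrix.unitaryGroup (Fin N) ℂ) := ⟨rfl⟩

lemma entry_norm_le {N : ℕ} (U : Matrix.unitaryGroup (Fin N) ℂ) (a b : Fin N) :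
    ‖(U : Matrix (Fin N) (Fin N) ℂ) a b‖ ≤ 1 := by
  have h := Matrix.mem_unitaryGroup_iff.mp U.2
  have h2 := congrFun (congrFun h a) a
  rw [Matrix.mul_apply, Matrix.one_apply_eq] at h2
  have h3 : (∑ k, ((Complex.normSq ((U : Matrix (Fin N) (Fin N) ℂ) a k) : ℝ) : ℂ)) = 1 := by
    rw [← h2]
    refine Finset.sum_congr rfl fun k _ => ?_
    rw [show star (U : Matrix (Fin N) (Fin N) ℂ) k a
        = conj ((U : Matrix (Fin N) (Fin N) ℂ) a k) from rfl, Complex.mul_conj]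
  have h4 : (∑ k, Complex.normSq ((U : Matrix (Fin N) (Fin N) ℂ) a k)) = 1 := by
    exact_mod_cast h3
  have h5 : Complex.normSq ((U : Matrix (Fin N) (Fin N) ℂ) a b) ≤ 1 := by
    rw [← h4]
    exact Finset.single_le_sum (fun k _ => Complex.normSq_nonneg _) (Finset.mem_univ b)
  have h6 : ‖(U : Matrix (Fin N) (Fin N) ℂ) a b‖ ^ 2 ≤ 1 := by
    rwa [← Complex.sq_norm] at h5
  nlinarith [norm_nonneg ((U : Matrix (Fin N) (Fin N) ℂ) a b)]

lemma entry_continuous {N : ℕ} (a b : Fin N) :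
    Continuous (fun U : Matrix.unitaryGroup (Fin N) ℂ => (U : Matrix (Fin N) (Fin N) ℂ) a b) :=
  Continuous.matrix_elem continuous_subtype_val a b

lemma integrable_pair {N : ℕ} (μ : Measure (Matrix.unitaryGroup (Fin N) ℂ))
    [IsProbabilityMeasure μ] (a b c d : Fin N) :
    Integrable (fun U : Matrix.unitaryGroup (Fin N) ℂ =>
      (U : Matrix (Fin N) (Fin N) ℂ) a b * conj ((U : Matrix (Fin N) (Fin N) ℂ) c d)) μ := by
  have hc : Continuous (fun U : Matrix.unitaryGroup (Fin N) ℂ =>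
      (U : Matrix (Fin N) (Fin N) ℂ) a b * conj ((U : Matrix (Fin N) (Fin N) ℂ) c d)) :=
    (entry_continuous a b).mul (Complex.continuous_conj.comp (entry_continuous c d))
  refine ⟨hc.aestronglyMeasurable, HasFiniteIntegral.of_bounded (C := 1) (ae_of_all μ fun U => ?_)⟩
  rw [norm_mul]
  calc ‖(U : Matrix (Fin N) (Fin N) ℂ) a b‖ * ‖conj ((U : Matrix (Fin N) (Fin N) ℂ) c d)‖
      ≤ 1 * 1 := by
        refine mul_le_mul (entry_norm_le U a b) ?_ (norm_nonneg _) zero_le_one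
        rw [RCLike.norm_conj]; exact entry_norm_le U c d
    _ = 1 := one_mul 1

lemma moment_offdiag {N : ℕ} (μ : Measure (Matrix.unitaryGroup (Fin N) ℂ))
    [μ.IsHaarMeasure] [IsProbabilityMeasure μ] {a c : Fin N} (h : a ≠ c) (b d : Fin N) :
    ∫ U : Matrix.unitaryGroup (Fin N) ℂ,
      (U : Matrix (Fin N) (Fin N) ℂ) a b * conj ((U : Matrix (Fin N) (Fin N) ℂ) c d) ∂μ = 0 := by
  set v : Fin N → ℂ := fun i => if i = a then -1 else 1 with hv
  have hvmul : (fun i => v i * star (v i)) = fun _ => (1 : ℂ) := by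
    funext i
    by_cases hi : i = a <;> simp [hv, hi]
  have hD : Matrix.diagonal v ∈ Matrix.unitaryGroup (Fin N) ℂ := by
    rw [Matrix.mem_unitaryGroup_iff, Matrix.star_eq_conjTranspose,
      Matrix.diagonal_conjTranspose, Matrix.diagonal_mul_diagonal]
    simp only [Pi.star_apply]
    rw [hvmul]
    exact Matrix.diagonal_one
  set D : Matrix.unitaryGroup (Fin N) ℂ := ⟨Matrix.diagonal v, hD⟩ with hDdef
  set f : Matrix.unitaryGroup (Fin N) ℂ → ℂ := fun U =>
    (U : Matrix (Fin N) (Fin N) ℂ) a b * conj ((U : Matrix (Fin N) (Fin N) ℂ) c d) with hf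
  have hinv : ∫ U, f (D * U) ∂μ = ∫ U, f U ∂μ := integral_mul_left_eq_self f D
  have hcomp : ∀ U : Matrix.unitaryGroup (Fin N) ℂ, f (D * U) = -(f U) := by
    intro U
    have hcoe : ((D * U : Matrix.unitaryGroup (Fin N) ℂ) : Matrix (Fin N) (Fin N) ℂ)
        = Matrix.diagonal v * (U : Matrix (Fin N) (Fin N) ℂ) := rfl
    simp only [hf, hcoe, Matrix.diagonal_mul]
    rw [show v a = -1 from if_pos rfl, show v c = 1 from if_neg (Ne.symm h)]
    rw [one_mul]
    ring
  rw [show (fun U => f (D * U)) = fun U => -(f U) from funext hcomp, integral_neg] at hinv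
  linear_combination (-1/2 : ℂ) * hinv

lemma permMatrix_mem {N : ℕ} (π : Equiv.Perm (Fin N)) :
    (π.toPEquiv.toMatrix : Matrix (Fin N) (Fin N) ℂ) ∈ Matrix.unitaryGroup (Fin N) ℂ := by
  rw [Matrix.mem_unitaryGroup_iff]
  have hstar : star (π.toPEquiv.toMatrix : Matrix (Fin N) (Fin N) ℂ)
      = (π.symm.toPEquiv.toMatrix : Matrix (Fin N) (Fin N) ℂ) := by
    rw [Matrix.star_eq_conjTranspose, Equiv.toPEquiv_symm, PEquiv.toMatrix_symm]
    ext i j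
    simp only [Matrix.conjTranspose_apply, Matrix.transpose_apply, PEquiv.toMatrix_apply]
    split <;> simp
  rw [hstar, ← PEquiv.toMatrix_trans, ← Equiv.toPEquiv_trans, Equiv.self_trans_symm,
    Equiv.toPEquiv_refl, PEquiv.toMatrix_refl]

lemma moment_rowswap {N : ℕ} (μ : Measure (Matrix.unitaryGroup (Fin N) ℂ))
    [μ.IsHaarMeasure] [IsProbabilityMeasure μ] (a a' b d : Fin N) :
    ∫ U : Matrix.unitaryGroup (Fin N) ℂ,
      (U : Matrix (Fin N) (Fin N) ℂ) a b * conj ((U : Matrix (Fin N) (Fin N) ℂ) a d) ∂μ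
    = ∫ U : Matrix.unitaryGroup (Fin N) ℂ,
      (U : Matrix (Fin N) (Fin N) ℂ) a' b * conj ((U : Matrix (Fin N) (Fin N) ℂ) a' d) ∂μ := by
  set π := Equiv.swap a a' with hπ
  set V : Matrix.unitaryGroup (Fin N) ℂ := ⟨π.toPEquiv.toMatrix, permMatrix_mem π⟩ with hV
  set f : Matrix.unitaryGroup (Fin N) ℂ → ℂ := fun U =>
    (U : Matrix (Fin N) (Fin N) ℂ) a b * conj ((U : Matrix (Fin N) (Fin N) ℂ) a d) with hf
  have hinv : ∫ U, f (V * U) ∂μ = ∫ U, f U ∂μ := integral_mul_left_eq_self f V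
  have hcomp : ∀ U : Matrix.unitaryGroup (Fin N) ℂ, f (V * U)
      = (U : Matrix (Fin N) (Fin N) ℂ) a' b * conj ((U : Matrix (Fin N) (Fin N) ℂ) a' d) := by
    intro U
    have hcoe : ((V * U : Matrix.unitaryGroup (Fin N) ℂ) : Matrix (Fin N) (Fin N) ℂ)
        = (U : Matrix (Fin N) (Fin N) ℂ).submatrix π id := by
      show (π.toPEquiv.toMatrix : Matrix (Fin N) (Fin N) ℂ) * (U : Matrix (Fin N) (Fin N) ℂ) = _
      exact PEquiv.toMatrix_toPEquiv_mul π _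
    simp only [hf, hcoe, Matrix.submatrix_apply, id_eq, hπ, Equiv.swap_apply_left]
  rw [show (fun U => f (V * U)) = _ from funext hcomp] at hinv
  exact hinv.symm

lemma moment_diag {N : ℕ} (hN : 0 < N) (μ : Measure (Matrix.unitaryGroup (Fin N) ℂ))
    [μ.IsHaarMeasure] [IsProbabilityMeasure μ] (a b d : Fin N) :
    ∫ U : Matrix.unitaryGroup (Fin N) ℂ,
      (U : Matrix (Fin N) (Fin N) ℂ) a b * conj ((U : Matrix (Fin N) (Fin N) ℂ) a d) ∂μ
    = (if b = d then 1 else 0) / (N : ℂ) := by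
  have hsum : (∑ a' : Fin N, ∫ U : Matrix.unitaryGroup (Fin N) ℂ,
      (U : Matrix (Fin N) (Fin N) ℂ) a' b * conj ((U : Matrix (Fin N) (Fin N) ℂ) a' d) ∂μ)
      = if b = d then 1 else 0 := by
    rw [← integral_finset_sum Finset.univ (fun a' _ => integrable_pair μ a' b a' d)]
    have heq : (fun U : Matrix.unitaryGroup (Fin N) ℂ => ∑ a' : Fin N,
        (U : Matrix (Fin N) (Fin N) ℂ) a' b * conj ((U : Matrix (Fin N) (Fin N) ℂ) a' d))
        = fun _ => if b = d then (1 : ℂ) else 0 := by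
      funext U
      have h := Matrix.mem_unitaryGroup_iff'.mp U.2
      have h2 := congrFun (congrFun h d) b
      rw [Matrix.mul_apply] at h2
      calc (∑ a' : Fin N, (U : Matrix (Fin N) (Fin N) ℂ) a' b
            * conj ((U : Matrix (Fin N) (Fin N) ℂ) a' d))
          = ∑ a' : Fin N, star (U : Matrix (Fin N) (Fin N) ℂ) d a'
            * (U : Matrix (Fin N) (Fin N) ℂ) a' b := by
            refine Finset.sum_congr rfl fun a' _ => ?_
            rw [show star (U : Matrix (Fin N) (Fin N) ℂ) d a'
              = conj ((U : Matrix (Fin N) (Fin N) ℂ) a' d) from rfl]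
            ring
        _ = (1 : Matrix (Fin N) (Fin N) ℂ) d b := h2
        _ = if b = d then (1 : ℂ) else 0 := by rw [Matrix.one_apply]; simp [eq_comm]
    rw [heq]
    simp
  have hc : ∀ a' : Fin N, (∫ U : Matrix.unitaryGroup (Fin N) ℂ,
      (U : Matrix (Fin N) (Fin N) ℂ) a' b * conj ((U : Matrix (Fin N) (Fin N) ℂ) a' d) ∂μ)
      = ∫ U : Matrix.unitaryGroup (Fin N) ℂ,
      (U : Matrix (Fin N) (Fin N) ℂ) a b * conj ((U : Matrix (Fin N) (Fin N) ℂ) a d) ∂μ :=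
    fun a' => moment_rowswap μ a' a b d
  rw [Finset.sum_congr rfl (fun a' _ => hc a'), Finset.sum_const, Finset.card_univ,
    Fintype.card_fin, nsmul_eq_mul] at hsum
  have hN' : (N : ℂ) ≠ 0 := Nat.cast_ne_zero.mpr hN.ne'
  field_simp
  rw [mul_comm]
  exact hsum

lemma moment {N : ℕ} (hN : 0 < N) (μ : Measure (Matrix.unitaryGroup (Fin N) ℂ))
    [μ.IsHaarMeasure] [IsProbabilityMeasure μ] (p q : Fin N × Fin N) :
    ∫ U : Matrix.unitaryGroup (Fin N) ℂ,
      (U : Matrix (Fin N) (Fin N) ℂ) p.1 p.2 * conj ((U : Matrix (Fin N) (Fin N) ℂ) q.1 q.2) ∂μ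
    = if p = q then ((N : ℂ))⁻¹ else 0 := by
  by_cases h1 : p.1 = q.1
  · rw [← h1, moment_diag hN μ p.1 p.2 q.2]
    by_cases h2 : p.2 = q.2
    · rw [if_pos h2, if_pos (Prod.ext h1 h2), one_div]
    · rw [if_neg h2, if_neg (fun hpq => h2 (by rw [hpq])), zero_div]
  · rw [moment_offdiag μ h1 p.2 q.2, if_neg (fun hpq => h1 (by rw [hpq]))]

lemma integral_trace_eq {N : ℕ} (hN : 0 < N) (μ : Measure (Matrix.unitaryGroup (Fin N) ℂ))
    [μ.IsHaarMeasure] [IsProbabilityMeasure μ] (σ σ' : Fin N × Fin N → Fin N × Fin N) :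
    ∫ U : Matrix.unitaryGroup (Fin N) ℂ,
      (entryMap σ (U : Matrix (Fin N) (Fin N) ℂ)
        * (entryMap σ' (U : Matrix (Fin N) (Fin N) ℂ))ᴴ).trace / (N : ℂ) ∂μ
    = ((((Finset.univ.filter fun x : Fin N × Fin N => σ x = σ' x).card : ℝ) / (N : ℝ) ^ 2 : ℝ) : ℂ) := by
  have hint : (fun U : Matrix.unitaryGroup (Fin N) ℂ =>
      (entryMap σ (U : Matrix (Fin N) (Fin N) ℂ)
        * (entryMap σ' (U : Matrix (Fin N) (Fin N) ℂ))ᴴ).trace / (N : ℂ))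
      = fun U : Matrix.unitaryGroup (Fin N) ℂ =>
        (∑ x : Fin N × Fin N, (U : Matrix (Fin N) (Fin N) ℂ) (σ x).1 (σ x).2
          * conj ((U : Matrix (Fin N) (Fin N) ℂ) (σ' x).1 (σ' x).2)) / (N : ℂ) := by
    funext U
    congr 1
    rw [Fintype.sum_prod_type]
    simp only [Matrix.trace, Matrix.diag_apply, Matrix.mul_apply, Matrix.conjTranspose_apply,
      entryMap, Matrix.of_apply]
    rfl
  rw [hint]
  rw [integral_div, integral_finset_sum Finset.univ
    (fun x _ => integrable_pair μ (σ x).1 (σ x).2 (σ' x).1 (σ' x).2)]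
  have : (∑ x : Fin N × Fin N, ∫ U : Matrix.unitaryGroup (Fin N) ℂ,
      (U : Matrix (Fin N) (Fin N) ℂ) (σ x).1 (σ x).2
        * conj ((U : Matrix (Fin N) (Fin N) ℂ) (σ' x).1 (σ' x).2) ∂μ)
      = ((Finset.univ.filter fun x : Fin N × Fin N => σ x = σ' x).card : ℂ) * ((N : ℂ))⁻¹ := by
    rw [Finset.sum_congr rfl (fun x _ => moment hN μ (σ x) (σ' x))]
    rw [← Finset.sum_filter, Finset.sum_const, nsmul_eq_mul]
  rw [this]
  have hN' : (N : ℂ) ≠ 0 := Nat.cast_ne_zero.mpr hN.ne'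
  rw [Complex.ofReal_div, Complex.ofReal_pow, Complex.ofReal_natCast, Complex.ofReal_natCast,
    sq]
  rw [div_eq_mul_inv, div_eq_mul_inv, mul_inv, ← mul_assoc]

/-- for non-decreasing sequences of positive integers with
`b_N·d_N = b'_N·d'_N = M_N → ∞` and `ϑ, ϑ' ∈ {−1,1}` (encoded by `θ, θ' : Bool`), writing
`Γ_N = Γ_{b_N,d_N}^{(ϑ)}` and `Γ'_N = Γ_{b'_N,d'_N}^{(ϑ')}`:
`E[tr(U_{M_N}^{Γ_N}(U_{M_N}^{Γ'_N})*)] → 0` iff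
`(1/M_N²)·#{(i,j) : Γ_N(i,j) = Γ'_N(i,j)} → 0`. -/
theorem stmt_14 (b d b' d' M : ℕ → ℕ)
    (hbm : Monotone b) (hdm : Monotone d) (hb'm : Monotone b') (hd'm : Monotone d')
    (hb : ∀ n, 0 < b n) (hd : ∀ n, 0 < d n) (hb' : ∀ n, 0 < b' n) (hd' : ∀ n, 0 < d' n)
    (hM : ∀ n, b n * d n = M n) (hM' : ∀ n, b' n * d' n = M n)
    (hMtop : Tendsto M atTop atTop) (θ θ' : Bool)
    (μ : ∀ n, Measure (Matrix.unitaryGroup (Fin (M n)) ℂ))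
    (hμ : ∀ n, (μ n).IsHaarMeasure) (hμp : ∀ n, IsProbabilityMeasure (μ n)) :
    Tendsto
      (fun n => ∫ U : Matrix.unitaryGroup (Fin (M n)) ℂ,
        (entryMap (pt θ (hM n)) (U : Matrix (Fin (M n)) (Fin (M n)) ℂ)
          * (entryMap (pt θ' (hM' n)) (U : Matrix (Fin (M n)) (Fin (M n)) ℂ))ᴴ).trace
            / (M n : ℂ) ∂(μ n))
      atTop (nhds 0)
    ↔ Tendsto
      (fun n => ((Finset.univ.filter fun x : Fin (M n) × Fin (M n) =>
          pt θ (hM n) x = pt θ' (hM' n) x).card : ℝ) / (M n : ℝ) ^ 2)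
      atTop (nhds 0) := by
  have hMpos : ∀ n, 0 < M n := fun n => (hM n) ▸ Nat.mul_pos (hb n) (hd n)
  have hfe : (fun n => ∫ U : Matrix.unitaryGroup (Fin (M n)) ℂ,
        (entryMap (pt θ (hM n)) (U : Matrix (Fin (M n)) (Fin (M n)) ℂ)
          * (entryMap (pt θ' (hM' n)) (U : Matrix (Fin (M n)) (Fin (M n)) ℂ))ᴴ).trace
            / (M n : ℂ) ∂(μ n))
      = fun n => ((((Finset.univ.filter fun x : Fin (M n) × Fin (M n) =>
          pt θ (hM n) x = pt θ' (hM' n) x).card : ℝ) / (M n : ℝ) ^ 2 : ℝ) : ℂ) := by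
    funext n
    haveI := hμ n
    haveI := hμp n
    exact integral_trace_eq (hMpos n) (μ n) _ _
  rw [hfe]
  exact Complex.ofReal_zero ▸ Filter.tendsto_ofReal_iff
end
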